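/- Let k be an odd positive integer, and let j be a positive integer such that j and 2j + k have exactly the same set of prime factors. Set g = gcd(j, 2j + k), and let r be a positive integer such that (2j/g)·r + 1 and ((2j+k)/g)·r + 1 are both prime and both coprime to k. Then n = 2j·(((2j+k)/g)·r + 1) satisfies φ(n+k) = 2·φ(n), where φ denotes Euler's totient function. -/
import Mathlib

theorem modified_GHP_lemma
    (k j r : ℕ) (hk : 0 < k) (hko : Odd k) (hj : 0 < j)
    (hsame : ∀ p : ℕ, p.Prime → (p ∣ j ↔ p ∣ (2 * j + k)))
    (hr : 0 < r)
    (hp1 : Nat.Prime ((2 * j / Nat.gcd j (2 * j + k)) * r + 1))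
    (hp2 : Nat.Prime (((2 * j + k) / Nat.gcd j (2 * j + k)) * r + 1))
    (hc1 : Nat.Coprime ((2 * j / Nat.gcd j (2 * j + k)) * r + 1) k)
    (hc2 : Nat.Coprime (((2 * j + k) / Nat.gcd j (2 * j + k)) * r + 1) k) :
    Nat.totient (2 * j * (((2 * j + k) / Nat.gcd j (2 * j + k)) * r + 1) + k) =
      2 * Nat.totient (2 * j * (((2 * j + k) / Nat.gcd j (2 * j + k)) * r + 1)) := by
  set m := 2 * j + k with hm
  set g := Nat.gcd j m with hg
  have hgj : g ∣ j := Nat.gcd_dvd_left _ _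
  have hgm : g ∣ m := Nat.gcd_dvd_right _ _
  have hg2j : g ∣ 2 * j := dvd_mul_of_dvd_right hgj 2
  have hg0 : 0 < g := Nat.gcd_pos_of_pos_left _ hj
  set a := 2 * j / g with hadef
  set b := m / g with hbdef
  have ha : a * g = 2 * j := Nat.div_mul_cancel hg2j
  have hb : b * g = m := Nat.div_mul_cancel hgm
  have hmo : Odd m := (even_two_mul j).add_odd hko
  have hjo : Odd j := by
    rcases Nat.even_or_odd j with he | ho
    · exfalso
      have h2m : (2 : ℕ) ∣ m := (hsame 2 Nat.prime_two).mp he.two_dvd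
      have := Nat.even_iff.mp (even_iff_two_dvd.mpr h2m)
      have := Nat.odd_iff.mp hmo
      omega
    · exact ho
  set p1 := a * r + 1 with hp1def
  set p2 := b * r + 1 with hp2def
  have hnd1 : ¬ p1 ∣ k := (hp1.coprime_iff_not_dvd).mp hc1
  have hnd2 : ¬ p2 ∣ k := (hp2.coprime_iff_not_dvd).mp hc2
  -- p1 does not divide m
  have hp1m : ¬ p1 ∣ m := by
    intro hdvd
    have hpj : p1 ∣ j := (hsame p1 hp1).mpr hdvd
    have : p1 ∣ k := by
      have := Nat.dvd_sub hdvd (dvd_mul_of_dvd_right hpj 2)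
      simpa [hm, Nat.add_sub_cancel_left] using this
    exact hnd1 this
  -- p2 does not divide 2*j
  have hp2j : ¬ p2 ∣ 2 * j := by
    intro hdvd
    rcases (Nat.Prime.dvd_mul hp2).mp hdvd with h2 | hjd
    · have hp2eq : p2 = 2 := (Nat.prime_dvd_prime_iff_eq hp2 Nat.prime_two).mp h2
      have hbr : b * r = 1 := by omega
      have hb1 : b = 1 := Nat.eq_one_of_mul_eq_one_right hbr
      have : m = g := by rw [← hb, hb1, one_mul]
      have hgle : g ≤ j := Nat.le_of_dvd hj hgj
      omega
    · have hpm : p2 ∣ m := (hsame p2 hp2).mp hjd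
      have : p2 ∣ k := by
        have := Nat.dvd_sub hpm (dvd_mul_of_dvd_right hjd 2)
        simpa [hm, Nat.add_sub_cancel_left] using this
      exact hnd2 this
  -- key identity: n + k = m * p1
  have key : 2 * j * p2 + k = m * p1 := by
    have h1 : 2 * j * b = m * a := by
      rw [← Nat.mul_div_assoc (2 * j) hgm, ← Nat.mul_div_assoc m hg2j, mul_comm]
    calc 2 * j * p2 + k = (2 * j * b) * r + (2 * j + k) := by rw [hp2def]; ring
      _ = (m * a) * r + m := by rw [h1, hm]
      _ = m * p1 := by rw [hp1def]; ring
  -- same prime factors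
  have hm0 : m ≠ 0 := by omega
  have hPF : m.primeFactors = j.primeFactors := by
    ext p
    simp only [Nat.mem_primeFactors, hm0, hj.ne', ne_eq, not_false_eq_true, and_true]
    constructor
    · rintro ⟨hp, hd⟩; exact ⟨hp, (hsame p hp).mpr hd⟩
    · rintro ⟨hp, hd⟩; exact ⟨hp, (hsame p hp).mp hd⟩
  have hkey : Nat.totient m * j = Nat.totient j * m := by
    have h1 := Nat.totient_mul_prod_primeFactors m
    have h2 := Nat.totient_mul_prod_primeFactors j
    rw [hPF] at h1
    set P := ∏ p ∈ j.primeFactors, p with hP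
    set Q := ∏ p ∈ j.primeFactors, (p - 1) with hQ
    have hP0 : 0 < P :=
      Finset.prod_pos fun p hp => (Nat.prime_of_mem_primeFactors hp).pos
    apply Nat.eq_of_mul_eq_mul_right hP0
    calc Nat.totient m * j * P = (Nat.totient m * P) * j := by ring
      _ = (m * Q) * j := by rw [h1]
      _ = m * (j * Q) := by ring
      _ = m * (Nat.totient j * P) := by rw [← h2]
      _ = Nat.totient j * m * P := by ring
  -- totient computations
  have hcop1 : Nat.Coprime m p1 :=
    Nat.Coprime.symm ((hp1.coprime_iff_not_dvd).mpr hp1m)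
  have hcop2 : Nat.Coprime (2 * j) p2 :=
    Nat.Coprime.symm ((hp2.coprime_iff_not_dvd).mpr hp2j)
  have hcop2j : Nat.Coprime 2 j := Nat.coprime_two_left.mpr hjo
  rw [key, Nat.totient_mul hcop1, Nat.totient_mul hcop2,
    Nat.totient_mul hcop2j, Nat.totient_prime hp1, Nat.totient_prime hp2,
    Nat.totient_two]
  simp only [hp1def, hp2def, Nat.add_sub_cancel, one_mul]
  apply Nat.eq_of_mul_eq_mul_right hg0
  calc Nat.totient m * (a * r) * g = Nat.totient m * (a * g) * r := by ring
    _ = Nat.totient m * (2 * j) * r := by rw [ha]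
    _ = (Nat.totient m * j) * (2 * r) := by ring
    _ = (Nat.totient j * m) * (2 * r) := by rw [hkey]
    _ = Nat.totient j * (b * g) * (2 * r) := by rw [hb]
    _ = 2 * (Nat.totient j * (b * r)) * g := by ring
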